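/- Second tropical duality (Theorem 1.2, identity (1.8)): assume the global sign-coherence hypothesis. Then for every n×n skew-symmetrizable integer matrix B and every finite sequence w = (k_1,…,k_m) of indices in {1,…,n}, one has C^B(w) · C^{-B^B(w)}(rev w) = I, where rev w = (k_m,…,k_1) is the reversed sequence; i.e. C^B(w) is invertible with inverse C^{-B^B(w)}(rev w). -/

import Mathlib

open Matrix

/-- Entrywise positive part `[B]₊`. -/
def matPos {n : ℕ} (B : Matrix (Fin n) (Fin n) ℤ) : Matrix (Fin n) (Fin n) ℤ :=
  fun i j => max (B i j) 0

/-- `B^{k•}` : the matrix `B` with all entries outside row `k` set to zero. -/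
def rowR {n : ℕ} (B : Matrix (Fin n) (Fin n) ℤ) (k : Fin n) : Matrix (Fin n) (Fin n) ℤ :=
  fun i j => if i = k then B i j else 0

/-- `B^{•k}` : the matrix `B` with all entries outside column `k` set to zero. -/
def colR {n : ℕ} (B : Matrix (Fin n) (Fin n) ℤ) (k : Fin n) : Matrix (Fin n) (Fin n) ℤ :=
  fun i j => if j = k then B i j else 0

/-- `J_k` : the identity matrix with its `(k,k)` entry replaced by `-1`. -/
def Jmat (n : ℕ) (k : Fin n) : Matrix (Fin n) (Fin n) ℤ :=
  Matrix.diagonal (fun i => if i = k then -1 else 1)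

/-- Matrix mutation `μ_k(B)`. -/
def mutB {n : ℕ} (B : Matrix (Fin n) (Fin n) ℤ) (k : Fin n) : Matrix (Fin n) (Fin n) ℤ :=
  fun i j =>
    if i = k ∨ j = k then -B i j
    else B i j + max (B i k) 0 * max (B k j) 0 - max (-B i k) 0 * max (-B k j) 0

/-- Mutation of the `C`-matrix in direction `l`, where `B` is the current exchange matrix. -/
def mutC {n : ℕ} (B C : Matrix (Fin n) (Fin n) ℤ) (l : Fin n) : Matrix (Fin n) (Fin n) ℤ :=
  fun i j =>
    if j = l then -C i j
    else C i j + max (C i l) 0 * max (B l j) 0 - max (-C i l) 0 * max (-B l j) 0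

/-- One step of the simultaneous `(B, C, G)` recursion with initial exchange matrix `B0`. -/
def BCGstep {n : ℕ} (B0 : Matrix (Fin n) (Fin n) ℤ)
    (p : Matrix (Fin n) (Fin n) ℤ × Matrix (Fin n) (Fin n) ℤ × Matrix (Fin n) (Fin n) ℤ)
    (l : Fin n) :
    Matrix (Fin n) (Fin n) ℤ × Matrix (Fin n) (Fin n) ℤ × Matrix (Fin n) (Fin n) ℤ :=
  (mutB p.1 l, mutC p.1 p.2.1 l,
    p.2.2 * (Jmat n l + colR (matPos p.1) l) - B0 * colR (matPos p.2.1) l)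

/-- The triple `(B_m, C_m, G_m)` obtained from `(B0, I, I)` by mutating along the word `w`. -/
def BCG {n : ℕ} (B0 : Matrix (Fin n) (Fin n) ℤ) (w : List (Fin n)) :
    Matrix (Fin n) (Fin n) ℤ × Matrix (Fin n) (Fin n) ℤ × Matrix (Fin n) (Fin n) ℤ :=
  w.foldl (BCGstep B0) (B0, 1, 1)

/-- `B^B(w)` : the exchange matrix at the end of the word `w`. -/
def Bmat {n : ℕ} (B0 : Matrix (Fin n) (Fin n) ℤ) (w : List (Fin n)) : Matrix (Fin n) (Fin n) ℤ :=
  (BCG B0 w).1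

/-- `C^B(w)` : the matrix of c-vectors at the end of the word `w`. -/
def Cmat {n : ℕ} (B0 : Matrix (Fin n) (Fin n) ℤ) (w : List (Fin n)) : Matrix (Fin n) (Fin n) ℤ :=
  (BCG B0 w).2.1

/-- `G^B(w)` : the matrix of g-vectors at the end of the word `w`. -/
def Gmat {n : ℕ} (B0 : Matrix (Fin n) (Fin n) ℤ) (w : List (Fin n)) : Matrix (Fin n) (Fin n) ℤ :=
  (BCG B0 w).2.2

/-- `B` is skew-symmetrized by the diagonal matrix with (positive) diagonal entries `d`,
i.e. `Bᵀ = -D B D⁻¹`, stated integrally as `Bᵀ D = -(D B)`. -/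
def SkewSymmBy {n : ℕ} (B : Matrix (Fin n) (Fin n) ℤ) (d : Fin n → ℤ) : Prop :=
  (∀ i, 0 < d i) ∧ Bᵀ * Matrix.diagonal d = -(Matrix.diagonal d * B)

/-- `B` is skew-symmetrizable. -/
def SkewSymmetrizable {n : ℕ} (B : Matrix (Fin n) (Fin n) ℤ) : Prop :=
  ∃ d : Fin n → ℤ, SkewSymmBy B d

/-- Every column of `C` has all entries nonnegative or all entries nonpositive. -/
def SignCoherent {n : ℕ} (C : Matrix (Fin n) (Fin n) ℤ) : Prop :=
  ∀ j, (∀ i, 0 ≤ C i j) ∨ (∀ i, C i j ≤ 0)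

/-- The global sign-coherence hypothesis in rank `n`: all C-matrices of all cluster patterns
of rank `n` are sign-coherent. -/
def GlobalSC (n : ℕ) : Prop :=
  ∀ B' : Matrix (Fin n) (Fin n) ℤ, SkewSymmetrizable B' →
    ∀ w' : List (Fin n), SignCoherent (Cmat B' w')

/-- The sign `ε_j(C)` of the `j`-th column of a sign-coherent matrix `C`:
`-1` if column `j` contains a negative entry, `1` otherwise. -/
def epsCol {n : ℕ} (C : Matrix (Fin n) (Fin n) ℤ) (j : Fin n) : ℤ :=
  if ∃ i, C i j < 0 then -1 else 1


section Part1
variable {n : ℕ}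

-- ===== integer max lemmas =====
private lemma max_of_nonneg' {x : ℤ} (h : 0 ≤ x) : max x 0 = x := max_eq_left h
private lemma max_of_nonpos' {x : ℤ} (h : x ≤ 0) : max x 0 = 0 := max_eq_right h

private lemma posSub (x : ℤ) : max x 0 - max (-x) 0 = x := by
  rcases le_total x 0 with h | h
  · rw [max_of_nonpos' h, max_of_nonneg' (neg_nonneg.2 h)]; ring
  · rw [max_of_nonneg' h, max_of_nonpos' (neg_nonpos.2 h)]; ring

private lemma pm1 (x y : ℤ) :
    max x 0 * max y 0 - max (-x) 0 * max (-y) 0 = x * max y 0 + max (-x) 0 * y := by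
  rcases le_total x 0 with hx | hx <;> rcases le_total y 0 with hy | hy
  · rw [max_of_nonpos' hx, max_of_nonpos' hy, max_of_nonneg' (neg_nonneg.2 hx),
      max_of_nonneg' (neg_nonneg.2 hy)]; ring
  · rw [max_of_nonpos' hx, max_of_nonneg' hy, max_of_nonneg' (neg_nonneg.2 hx),
      max_of_nonpos' (neg_nonpos.2 hy)]; ring
  · rw [max_of_nonneg' hx, max_of_nonpos' hy, max_of_nonpos' (neg_nonpos.2 hx),
      max_of_nonneg' (neg_nonneg.2 hy)]; ring
  · rw [max_of_nonneg' hx, max_of_nonneg' hy, max_of_nonpos' (neg_nonpos.2 hx),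
      max_of_nonpos' (neg_nonpos.2 hy)]; ring

private lemma pm2 (x y : ℤ) :
    max x 0 * max y 0 - max (-x) 0 * max (-y) 0 = x * max (-y) 0 + max x 0 * y := by
  rcases le_total x 0 with hx | hx <;> rcases le_total y 0 with hy | hy
  · rw [max_of_nonpos' hx, max_of_nonpos' hy, max_of_nonneg' (neg_nonneg.2 hx),
      max_of_nonneg' (neg_nonneg.2 hy)]; ring
  · rw [max_of_nonpos' hx, max_of_nonneg' hy, max_of_nonneg' (neg_nonneg.2 hx),
      max_of_nonpos' (neg_nonpos.2 hy)]; ring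
  · rw [max_of_nonneg' hx, max_of_nonpos' hy, max_of_nonpos' (neg_nonpos.2 hx),
      max_of_nonneg' (neg_nonneg.2 hy)]; ring
  · rw [max_of_nonneg' hx, max_of_nonneg' hy, max_of_nonpos' (neg_nonpos.2 hx),
      max_of_nonpos' (neg_nonpos.2 hy)]; ring

private lemma dmax {d : ℤ} (x : ℤ) (hd : 0 ≤ d) : d * max x 0 = max (d * x) 0 := by
  rcases le_total x 0 with hx | hx
  · rw [max_of_nonpos' hx, max_of_nonpos' (by nlinarith : d * x ≤ 0), mul_zero]
  · rw [max_of_nonneg' hx, max_of_nonneg' (mul_nonneg hd hx)]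

-- ===== structural matrix lemmas =====
lemma rowR_mul (X M : Matrix (Fin n) (Fin n) ℤ) (l : Fin n) :
    rowR X l * M = rowR (X * M) l := by
  ext i j
  by_cases h : i = l
  · subst h; simp [Matrix.mul_apply, rowR]
  · simp [Matrix.mul_apply, rowR, h]

lemma mul_colR (X M : Matrix (Fin n) (Fin n) ℤ) (l : Fin n) :
    M * colR X l = colR (M * X) l := by
  ext i j
  by_cases h : j = l
  · subst h; simp [Matrix.mul_apply, colR]
  · simp [Matrix.mul_apply, colR, h]

lemma mul_rowR (X M : Matrix (Fin n) (Fin n) ℤ) (l : Fin n) :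
    M * rowR X l = Matrix.vecMulVec (fun i => M i l) (X l) := by
  ext i j
  simp [Matrix.mul_apply, rowR, Matrix.vecMulVec_apply, mul_ite, mul_zero,
    Finset.sum_ite_eq]

lemma colR_mul (X M : Matrix (Fin n) (Fin n) ℤ) (l : Fin n) :
    colR X l * M = Matrix.vecMulVec (fun i => X i l) (M l) := by
  ext i j
  simp [Matrix.mul_apply, colR, Matrix.vecMulVec_apply, ite_mul, zero_mul,
    Finset.sum_ite_eq]

lemma JJ (l : Fin n) : Jmat n l * Jmat n l = 1 := by
  rw [Jmat, Matrix.diagonal_mul_diagonal]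
  have : (fun i => (if i = l then (-1:ℤ) else 1) * (if i = l then -1 else 1)) = fun _ => 1 := by
    funext i; by_cases h : i = l <;> simp [h]
  rw [this, Matrix.diagonal_one]

lemma J_mul_rowR (X : Matrix (Fin n) (Fin n) ℤ) (l : Fin n) :
    Jmat n l * rowR X l = -(rowR X l) := by
  ext i j
  by_cases h : i = l <;>
    simp [Jmat, Matrix.diagonal_mul, rowR, h]

lemma rowR_mul_J (X : Matrix (Fin n) (Fin n) ℤ) (l : Fin n) (h : X l l = 0) :
    rowR X l * Jmat n l = rowR X l := by
  ext i j
  by_cases hj : j = l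
  · by_cases hi : i = l <;> simp [Jmat, Matrix.mul_diagonal, rowR, hj, hi, h]
  · simp [Jmat, Matrix.mul_diagonal, rowR, hj]

lemma rowR_rowR (X Y : Matrix (Fin n) (Fin n) ℤ) (l : Fin n) (h : X l l = 0) :
    rowR X l * rowR Y l = 0 := by
  rw [rowR_mul, mul_rowR]
  ext i j
  by_cases hi : i = l <;> simp [rowR, Matrix.vecMulVec_apply, hi, h]

lemma J_mul_colR (X : Matrix (Fin n) (Fin n) ℤ) (l : Fin n) (h : X l l = 0) :
    Jmat n l * colR X l = colR X l := by
  ext i j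
  by_cases hi : i = l
  · by_cases hj : j = l <;> simp [Jmat, Matrix.diagonal_mul, colR, hi, hj, h]
  · simp [Jmat, Matrix.diagonal_mul, colR, hi]

lemma colR_mul_J (X : Matrix (Fin n) (Fin n) ℤ) (l : Fin n) :
    colR X l * Jmat n l = -(colR X l) := by
  ext i j
  by_cases h : j = l <;>
    simp [Jmat, Matrix.mul_diagonal, colR, h]

lemma colR_colR (X Y : Matrix (Fin n) (Fin n) ℤ) (l : Fin n) (h : X l l = 0) :
    colR Y l * colR X l = 0 := by
  rw [mul_colR, colR_mul]
  ext i j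
  by_cases hj : j = l <;> simp [colR, Matrix.vecMulVec_apply, hj, h]

end Part1
section Part2
variable {n : ℕ}

/-- scalar multiple as a plain function (opaque to simp's smul lemmas) -/
def smulM (s : ℤ) (B : Matrix (Fin n) (Fin n) ℤ) : Matrix (Fin n) (Fin n) ℤ :=
  fun i j => s * B i j

lemma smulM_apply (s : ℤ) (B : Matrix (Fin n) (Fin n) ℤ) (i j : Fin n) :
    smulM s B i j = s * B i j := rfl

/-- `E_s(B,l) = J_l + [sB]_+^{l•}`. -/
def Emat (B : Matrix (Fin n) (Fin n) ℤ) (l : Fin n) (s : ℤ) : Matrix (Fin n) (Fin n) ℤ :=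
  Jmat n l + rowR (matPos (smulM s B)) l

/-- `F_s(B,l) = J_l + [sB]_+^{•l}`. -/
def Fmat (B : Matrix (Fin n) (Fin n) ℤ) (l : Fin n) (s : ℤ) : Matrix (Fin n) (Fin n) ℤ :=
  Jmat n l + colR (matPos (smulM s B)) l

lemma matPos_ll {B : Matrix (Fin n) (Fin n) ℤ} {l : Fin n} (s : ℤ) (h : B l l = 0) :
    matPos (smulM s B) l l = 0 := by
  simp [matPos, smulM_apply, h]

lemma Emat_invol {B : Matrix (Fin n) (Fin n) ℤ} {l : Fin n} (s : ℤ) (h : B l l = 0) :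
    Emat B l s * Emat B l s = 1 := by
  have h0 := matPos_ll s h
  rw [Emat, add_mul, mul_add, mul_add, JJ, J_mul_rowR, rowR_mul_J _ _ h0, rowR_rowR _ _ _ h0]
  abel

lemma Fmat_invol {B : Matrix (Fin n) (Fin n) ℤ} {l : Fin n} (s : ℤ) (h : B l l = 0) :
    Fmat B l s * Fmat B l s = 1 := by
  have h0 := matPos_ll s h
  rw [Fmat, add_mul, mul_add, mul_add, JJ, J_mul_colR _ _ h0, colR_mul_J, colR_colR _ _ _ h0]
  abel

lemma Emat_mul_apply_ne {B M : Matrix (Fin n) (Fin n) ℤ} {l i : Fin n} (s : ℤ) (j : Fin n)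
    (hi : i ≠ l) : (Emat B l s * M) i j = M i j := by
  simp [Emat, Matrix.add_mul, Matrix.add_apply, Jmat, Matrix.diagonal_mul, rowR_mul, rowR, hi]

lemma mul_Emat_apply (B M : Matrix (Fin n) (Fin n) ℤ) (l : Fin n) (s : ℤ) (i j : Fin n) :
    (M * Emat B l s) i j = M i j * (if j = l then -1 else 1) + M i l * max (s * B l j) 0 := by
  simp [Emat, Matrix.mul_add, Matrix.add_apply, Jmat, Matrix.mul_diagonal, mul_rowR,
    Matrix.vecMulVec_apply, matPos, smulM_apply]

lemma Emat_apply_ll {B : Matrix (Fin n) (Fin n) ℤ} {l : Fin n} (s : ℤ) (h : B l l = 0) :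
    Emat B l s l l = -1 := by
  simp [Emat, Matrix.add_apply, Jmat, Matrix.diagonal_apply, rowR, matPos, smulM_apply, h]

lemma Emat_mul_col_single {B M : Matrix (Fin n) (Fin n) ℤ} {l j : Fin n} (s : ℤ)
    (h0 : B l l = 0) (hM : ∀ i, i ≠ l → M i j = 0) (i : Fin n) :
    (Emat B l s * M) i j = if i = l then -(M l j) else 0 := by
  by_cases hi : i = l
  · subst hi
    rw [if_pos rfl, Matrix.mul_apply,
      Finset.sum_eq_single i (fun t _ ht => by rw [hM t ht, mul_zero])
        (fun h => absurd (Finset.mem_univ i) h), Emat_apply_ll s h0]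
    ring
  · rw [if_neg hi, Emat_mul_apply_ne s j hi, hM i hi]

lemma Emat_sub (B : Matrix (Fin n) (Fin n) ℤ) (l : Fin n) (s : ℤ) :
    Emat B l s = Emat B l (-s) + rowR (smulM s B) l := by
  ext i j
  simp only [Emat, Matrix.add_apply, rowR, matPos, smulM_apply, neg_mul]
  by_cases hi : i = l
  · simp only [if_pos hi]
    linarith [posSub (s * B i j)]
  · simp [if_neg hi]

lemma Emat_neg (B : Matrix (Fin n) (Fin n) ℤ) (l : Fin n) (s : ℤ) :
    Emat (-B) l s = Emat B l (-s) := by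
  unfold Emat
  congr 1
  ext i j
  by_cases hi : i = l <;>
    simp [rowR, matPos, smulM_apply, Matrix.neg_apply, hi, neg_mul, mul_neg]

lemma mutB_row_l (B : Matrix (Fin n) (Fin n) ℤ) (l t : Fin n) : (mutB B l) l t = -B l t := by
  simp [mutB]

lemma Emat_mut (B : Matrix (Fin n) (Fin n) ℤ) (l : Fin n) (s : ℤ) :
    Emat (mutB B l) l s = Emat B l (-s) := by
  unfold Emat
  congr 1
  ext i j
  by_cases hi : i = l <;>
    simp [rowR, matPos, smulM_apply, hi, mutB, neg_mul, mul_neg]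

lemma Emat_negmut (B : Matrix (Fin n) (Fin n) ℤ) (l : Fin n) (s : ℤ) :
    Emat (-(mutB B l)) l s = Emat B l s := by
  rw [Emat_neg, Emat_mut, neg_neg]

-- ===== mutation formulas =====
lemma mutB_eq {B : Matrix (Fin n) (Fin n) ℤ} {l : Fin n} {s : ℤ} (h0 : B l l = 0)
    (hs : s = 1 ∨ s = -1) :
    mutB B l = Fmat B l (-s) * B * Emat B l s := by
  have hFB : ∀ i j, (Fmat B l (-s) * B) i j
      = (if i = l then -1 else 1) * B i j + max (-s * B i l) 0 * B l j := by
    intro i j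
    simp [Fmat, Matrix.add_mul, Matrix.add_apply, Jmat, Matrix.diagonal_mul, colR_mul,
      Matrix.vecMulVec_apply, matPos, smulM_apply]
  ext i j
  rw [mul_Emat_apply, hFB, hFB, h0, mul_zero, add_zero]
  by_cases hi : i = l
  · by_cases hj : j = l
    · simp [mutB, hi, hj, h0]
    · simp [mutB, hi, hj, h0]
  · by_cases hj : j = l
    · simp [mutB, hi, hj, h0]
    · have hcond : ¬(i = l ∨ j = l) := by tauto
      simp only [mutB, if_neg hcond, if_neg hi, if_neg hj, one_mul, mul_one]
      rcases hs with rfl | rfl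
      · simp only [neg_one_mul, one_mul, neg_neg]
        linarith [pm1 (B i l) (B l j)]
      · simp only [neg_one_mul, one_mul, neg_neg]
        linarith [pm2 (B i l) (B l j)]

lemma mutC_eq_pos {B C : Matrix (Fin n) (Fin n) ℤ} {l : Fin n} (h0 : B l l = 0)
    (h : ∀ i, 0 ≤ C i l) : mutC B C l = C * Emat B l 1 := by
  ext i j
  rw [mul_Emat_apply]
  by_cases hj : j = l
  · subst hj; simp [mutC, h0]
  · simp only [mutC, if_neg hj, if_neg hj, one_mul, mul_one]
    rw [max_of_nonneg' (h i), max_of_nonpos' (neg_nonpos.2 (h i))]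
    ring
lemma mutC_eq_neg {B C : Matrix (Fin n) (Fin n) ℤ} {l : Fin n} (h0 : B l l = 0)
    (h : ∀ i, C i l ≤ 0) : mutC B C l = C * Emat B l (-1) := by
  ext i j
  rw [mul_Emat_apply]
  by_cases hj : j = l
  · subst hj; simp [mutC, h0]
  · simp only [mutC, if_neg hj, one_mul, mul_one, neg_one_mul]
    rw [max_of_nonpos' (h i), max_of_nonneg' (neg_nonneg.2 (h i))]
    ring

-- ===== skew-symmetrizability =====
lemma skew_entry {B : Matrix (Fin n) (Fin n) ℤ} {d : Fin n → ℤ} (hB : SkewSymmBy B d)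
    (i j : Fin n) : B j i * d j = -(d i * B i j) := by
  have h : (Bᵀ * Matrix.diagonal d) i j = (-(Matrix.diagonal d * B)) i j := by rw [hB.2]
  simpa [Matrix.mul_diagonal, Matrix.diagonal_mul, Matrix.transpose_apply,
    Matrix.neg_apply] using h

lemma skew_diag {B : Matrix (Fin n) (Fin n) ℤ} {d : Fin n → ℤ} (hB : SkewSymmBy B d)
    (i : Fin n) : B i i = 0 := by
  have h := skew_entry hB i i
  have h2 : d i * B i i = 0 := by linarith [mul_comm (B i i) (d i)]
  rcases mul_eq_zero.mp h2 with h3 | h3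
  · exact absurd h3 (hB.1 i).ne'
  · exact h3

lemma skew_pmax {B : Matrix (Fin n) (Fin n) ℤ} {d : Fin n → ℤ} (hB : SkewSymmBy B d)
    (s : ℤ) (a b : Fin n) : d b * max (s * B b a) 0 = d a * max (-s * B a b) 0 := by
  rw [dmax _ (hB.1 b).le, dmax _ (hB.1 a).le]
  congr 1
  linear_combination s * skew_entry hB a b

lemma skew_neg {B : Matrix (Fin n) (Fin n) ℤ} {d : Fin n → ℤ} (hB : SkewSymmBy B d) :
    SkewSymmBy (-B) d := by
  refine ⟨hB.1, ?_⟩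
  rw [Matrix.transpose_neg, Matrix.neg_mul, hB.2, Matrix.mul_neg, neg_neg]

lemma skew_mutB {B : Matrix (Fin n) (Fin n) ℤ} {d : Fin n → ℤ} (hB : SkewSymmBy B d)
    (l : Fin n) : SkewSymmBy (mutB B l) d := by
  refine ⟨hB.1, ?_⟩
  ext i j
  simp only [Matrix.mul_diagonal, Matrix.diagonal_mul, Matrix.transpose_apply,
    Matrix.neg_apply]
  by_cases h : i = l ∨ j = l
  · have h' : j = l ∨ i = l := h.symm
    rw [show (mutB B l) j i = -B j i from by simp [mutB, h'],
      show (mutB B l) i j = -B i j from by simp [mutB, h]]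
    linear_combination -skew_entry hB i j
  · rcases not_or.mp h with ⟨hi, hj⟩
    have hji : ¬(j = l ∨ i = l) := by tauto
    rw [show (mutB B l) j i
        = B j i + max (B j l) 0 * max (B l i) 0 - max (-B j l) 0 * max (-B l i) 0 from by
          simp [mutB, hji],
      show (mutB B l) i j
        = B i j + max (B i l) 0 * max (B l j) 0 - max (-B i l) 0 * max (-B l j) 0 from by
          simp [mutB, h]]
    have e0 := skew_entry hB i j
    -- first pair
    have k1 : d l * (max (B j l) 0 * max (B l i) 0 * d j)
        = d l * (d i * (max (-B i l) 0 * max (-B l j) 0)) := by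
      have a1 : d j * max (1 * B j l) 0 = d l * max (-1 * B l j) 0 := skew_pmax hB 1 l j
      have a2 : d l * max (1 * B l i) 0 = d i * max (-1 * B i l) 0 := skew_pmax hB 1 i l
      simp only [one_mul, neg_one_mul] at a1 a2
      calc d l * (max (B j l) 0 * max (B l i) 0 * d j)
          = (d j * max (B j l) 0) * (d l * max (B l i) 0) := by ring
        _ = (d l * max (-B l j) 0) * (d i * max (-B i l) 0) := by rw [a1, a2]
        _ = d l * (d i * (max (-B i l) 0 * max (-B l j) 0)) := by ring
    have c1 := mul_left_cancel₀ (hB.1 l).ne' k1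
    have k2 : d l * (max (-B j l) 0 * max (-B l i) 0 * d j)
        = d l * (d i * (max (B i l) 0 * max (B l j) 0)) := by
      have a1 : d j * max (-1 * B j l) 0 = d l * max (1 * B l j) 0 := by
        have := skew_pmax hB (-1) l j; simpa using this
      have a2 : d l * max (-1 * B l i) 0 = d i * max (1 * B i l) 0 := by
        have := skew_pmax hB (-1) i l; simpa using this
      simp only [one_mul, neg_one_mul] at a1 a2
      calc d l * (max (-B j l) 0 * max (-B l i) 0 * d j)
          = (d j * max (-B j l) 0) * (d l * max (-B l i) 0) := by ring
        _ = (d l * max (B l j) 0) * (d i * max (B i l) 0) := by rw [a1, a2]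
        _ = d l * (d i * (max (B i l) 0 * max (B l j) 0)) := by ring
    have c2 := mul_left_cancel₀ (hB.1 l).ne' k2
    linear_combination e0 + c1 - c2

lemma Fmat_transpose {B : Matrix (Fin n) (Fin n) ℤ} {d : Fin n → ℤ} (hB : SkewSymmBy B d)
    (l : Fin n) (s : ℤ) :
    (Fmat B l s)ᵀ * Matrix.diagonal d = Matrix.diagonal d * Emat B l (-s) := by
  have h0 : B l l = 0 := skew_diag hB l
  ext i j
  simp only [Matrix.mul_diagonal, Matrix.diagonal_mul, Matrix.transpose_apply,
    Fmat, Emat, Matrix.add_apply, Jmat, Matrix.diagonal_apply, colR, rowR, matPos,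
    smulM_apply]
  by_cases hi : i = l
  · by_cases hj : j = l
    · simp [hi, hj, h0]
    · have h2 : ¬ l = j := fun h => hj h.symm
      simp only [hi, if_pos rfl, if_neg hj, if_neg h2, zero_add, add_zero, if_true,
        eq_self_iff_true]
      rw [mul_comm (max (s * B j l) 0) (d j)]
      exact skew_pmax hB s l j
  · by_cases hij : i = j
    · have hj : ¬ j = l := by rw [← hij]; exact hi
      simp only [← hij, if_neg hi, add_zero, if_pos rfl, if_true, eq_self_iff_true]
      ring
    · have hji : ¬(j = i) := fun h => hij h.symm
      simp [hi, hij, hji]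

end Part2
section Part3
variable {n : ℕ}

-- ===== fold plumbing =====
lemma BCG_fst (B0 : Matrix (Fin n) (Fin n) ℤ) :
    ∀ (w : List (Fin n)) (p : Matrix (Fin n) (Fin n) ℤ × Matrix (Fin n) (Fin n) ℤ ×
      Matrix (Fin n) (Fin n) ℤ),
      (List.foldl (BCGstep B0) p w).1 = w.foldl mutB p.1 := by
  intro w
  induction w with
  | nil => intro p; rfl
  | cons l u ih => intro p; exact ih (BCGstep B0 p l)

lemma Bmat_nil (B0 : Matrix (Fin n) (Fin n) ℤ) : Bmat B0 [] = B0 := rfl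
lemma Cmat_nil (B0 : Matrix (Fin n) (Fin n) ℤ) : Cmat B0 [] = 1 := rfl
lemma Gmat_nil (B0 : Matrix (Fin n) (Fin n) ℤ) : Gmat B0 [] = 1 := rfl

lemma Bmat_append (B0 : Matrix (Fin n) (Fin n) ℤ) (w : List (Fin n)) (l : Fin n) :
    Bmat B0 (w ++ [l]) = mutB (Bmat B0 w) l := by
  unfold Bmat BCG
  rw [List.foldl_append]
  rfl

lemma Cmat_append (B0 : Matrix (Fin n) (Fin n) ℤ) (w : List (Fin n)) (l : Fin n) :
    Cmat B0 (w ++ [l]) = mutC (Bmat B0 w) (Cmat B0 w) l := by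
  unfold Cmat Bmat BCG
  rw [List.foldl_append]
  rfl

lemma Gmat_append (B0 : Matrix (Fin n) (Fin n) ℤ) (w : List (Fin n)) (l : Fin n) :
    Gmat B0 (w ++ [l]) = Gmat B0 w * (Jmat n l + colR (matPos (Bmat B0 w)) l)
      - B0 * colR (matPos (Cmat B0 w)) l := by
  unfold Gmat Cmat Bmat BCG
  rw [List.foldl_append]
  rfl

lemma Bmat_cons (B0 : Matrix (Fin n) (Fin n) ℤ) (l : Fin n) (w : List (Fin n)) :
    Bmat B0 (l :: w) = Bmat (mutB B0 l) w := by
  unfold Bmat BCG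
  rw [List.foldl_cons, BCG_fst, BCG_fst]
  rfl

lemma mutB_neg (B : Matrix (Fin n) (Fin n) ℤ) (l : Fin n) : mutB (-B) l = -(mutB B l) := by
  ext i j
  by_cases h : i = l ∨ j = l <;> simp [mutB, h, Matrix.neg_apply] <;> ring

lemma mutB_mutB (B : Matrix (Fin n) (Fin n) ℤ) (l : Fin n) : mutB (mutB B l) l = B := by
  ext i j
  by_cases h : i = l ∨ j = l
  · simp [mutB, h]
  · rcases not_or.mp h with ⟨hi, hj⟩
    simp [mutB, h, hi, hj]

lemma Bmat_neg (w : List (Fin n)) : ∀ B0 : Matrix (Fin n) (Fin n) ℤ,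
    Bmat (-B0) w = -(Bmat B0 w) := by
  induction w with
  | nil => intro B0; rfl
  | cons l u ih => intro B0; rw [Bmat_cons, Bmat_cons, mutB_neg, ih]

lemma Bmat_rev (w : List (Fin n)) : ∀ B0 : Matrix (Fin n) (Fin n) ℤ,
    Bmat (Bmat B0 w) w.reverse = B0 := by
  induction w with
  | nil => intro B0; rfl
  | cons l u ih =>
    intro B0
    rw [Bmat_cons, List.reverse_cons, Bmat_append, ih, mutB_mutB]

lemma skew_Bmat {B0 : Matrix (Fin n) (Fin n) ℤ} {d : Fin n → ℤ} (hB : SkewSymmBy B0 d)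
    (w : List (Fin n)) : SkewSymmBy (Bmat B0 w) d := by
  induction w using List.reverseRecOn with
  | nil => exact hB
  | append_singleton w l ih => rw [Bmat_append]; exact skew_mutB ih l

lemma smulM_one (B : Matrix (Fin n) (Fin n) ℤ) : smulM 1 B = B := by
  ext i j; simp [smulM]

-- ===== epsCol lemmas =====
lemma epsCol_cases (C : Matrix (Fin n) (Fin n) ℤ) (j : Fin n) :
    epsCol C j = 1 ∨ epsCol C j = -1 := by
  unfold epsCol; split <;> simp

lemma epsCol_spec_pos {C : Matrix (Fin n) (Fin n) ℤ} {j : Fin n} (h : epsCol C j = 1) :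
    ∀ i, 0 ≤ C i j := by
  intro i
  by_contra hi
  rw [epsCol, if_pos ⟨i, lt_of_not_ge hi⟩] at h
  norm_num at h

lemma epsCol_spec_neg {C : Matrix (Fin n) (Fin n) ℤ} {j : Fin n} (hsc : SignCoherent C)
    (h : epsCol C j = -1) : ∀ i, C i j ≤ 0 := by
  have hex : ∃ i, C i j < 0 := by
    by_contra hc
    rw [epsCol, if_neg hc] at h
    norm_num at h
  rcases hsc j with hall | hall
  · obtain ⟨i, hi⟩ := hex
    exact absurd (hall i) (not_le.2 hi)
  · exact hall

lemma epsCol_neg_of {C : Matrix (Fin n) (Fin n) ℤ} {j : Fin n} {i0 : Fin n}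
    (h : C i0 j < 0) : epsCol C j = -1 := by
  rw [epsCol, if_pos ⟨i0, h⟩]

lemma epsCol_pos_of {C : Matrix (Fin n) (Fin n) ℤ} {j : Fin n} {i0 : Fin n}
    (hsc : SignCoherent C) (h : 0 < C i0 j) : epsCol C j = 1 := by
  rw [epsCol, if_neg]
  rintro ⟨i, hi⟩
  rcases hsc j with hall | hall
  · exact absurd (hall i) (not_le.2 hi)
  · exact absurd (hall i0) (not_le.2 h)

lemma epsCol_id (l : Fin n) : epsCol (1 : Matrix (Fin n) (Fin n) ℤ) l = 1 := by
  rw [epsCol, if_neg]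
  rintro ⟨i, hi⟩
  rw [Matrix.one_apply] at hi
  by_cases h : i = l <;> simp [h] at hi

lemma epsCol_single {C : Matrix (Fin n) (Fin n) ℤ} {j r : Fin n} {c : ℤ}
    (h : ∀ i, i ≠ r → C i j = 0) (hval : C r j = c) (hc : c = 1 ∨ c = -1) :
    epsCol C j = c := by
  rcases hc with rfl | rfl
  · rw [epsCol, if_neg]
    rintro ⟨i, hi⟩
    by_cases hir : i = r
    · rw [hir, hval] at hi; norm_num at hi
    · rw [h i hir] at hi; norm_num at hi
  · exact epsCol_neg_of (i0 := r) (by rw [hval]; norm_num)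

lemma epsCol_congr {C C' : Matrix (Fin n) (Fin n) ℤ} {j r : Fin n}
    (hC : SignCoherent C) (hC' : SignCoherent C')
    (hagree : ∀ i, i ≠ r → C' i j = C i j) (i0 : Fin n) (hi0 : i0 ≠ r) (h0 : C i0 j ≠ 0) :
    epsCol C' j = epsCol C j := by
  rcases lt_or_gt_of_ne h0 with h | h
  · rw [epsCol_neg_of h, epsCol_neg_of (show C' i0 j < 0 by rw [hagree i0 hi0]; exact h)]
  · rw [epsCol_pos_of hC h, epsCol_pos_of hC' (show 0 < C' i0 j by rw [hagree i0 hi0]; exact h)]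

lemma invUnique {M X Y : Matrix (Fin n) (Fin n) ℤ} (h1 : M * X = 1) (h2 : M * Y = 1) :
    X = Y := by
  have hX : X * M = 1 := mul_eq_one_comm.mp h1
  calc X = X * (M * Y) := by rw [h2, mul_one]
    _ = (X * M) * Y := by rw [mul_assoc]
    _ = Y := by rw [hX, one_mul]

-- ===== one-step C recursion with signs =====
lemma stepC {B0 : Matrix (Fin n) (Fin n) ℤ} {w : List (Fin n)} {l : Fin n}
    (hsc : SignCoherent (Cmat B0 w)) (h0 : (Bmat B0 w) l l = 0) :
    Cmat B0 (w ++ [l]) = Cmat B0 w * Emat (Bmat B0 w) l (epsCol (Cmat B0 w) l) := by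
  rw [Cmat_append]
  rcases epsCol_cases (Cmat B0 w) l with h | h
  · rw [h]; exact mutC_eq_pos h0 (epsCol_spec_pos h)
  · rw [h]; exact mutC_eq_neg h0 (epsCol_spec_neg hsc h)

-- ===== the core invariants: skewness, B0·C = G·B_t, Gᵀ·D·C = D =====
lemma core (hGSC : GlobalSC n) (B0 : Matrix (Fin n) (Fin n) ℤ) (d : Fin n → ℤ)
    (hB : SkewSymmBy B0 d) (w : List (Fin n)) :
    B0 * Cmat B0 w = Gmat B0 w * Bmat B0 w ∧
    (Gmat B0 w)ᵀ * Matrix.diagonal d * Cmat B0 w = Matrix.diagonal d := by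
  induction w using List.reverseRecOn with
  | nil =>
    constructor
    · rw [Cmat_nil, Gmat_nil, Bmat_nil, mul_one, one_mul]
    · rw [Cmat_nil, Gmat_nil, Matrix.transpose_one, one_mul, mul_one]
  | append_singleton w l ih =>
    obtain ⟨hK1, hdual⟩ := ih
    have hskew : SkewSymmBy (Bmat B0 w) d := skew_Bmat hB w
    have hsc : SignCoherent (Cmat B0 w) := hGSC B0 ⟨d, hB⟩ w
    have h0 : (Bmat B0 w) l l = 0 := skew_diag hskew l
    have hε := epsCol_cases (Cmat B0 w) l
    have hC := stepC hsc h0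
    have hG : Gmat B0 (w ++ [l])
        = Gmat B0 w * Fmat (Bmat B0 w) l (-(epsCol (Cmat B0 w) l)) := by
      rw [Gmat_append]
      rcases hε with h | h
      · have hpos := epsCol_spec_pos h
        have hcol : colR (matPos (Cmat B0 w)) l = colR (Cmat B0 w) l := by
          ext i j
          by_cases hj : j = l
          · simp [colR, matPos, hj, max_of_nonneg' (hpos i)]
          · simp [colR, hj]
        rw [hcol, mul_colR, hK1, ← mul_colR, ← mul_sub, h]
        congr 1
        rw [Fmat]
        rw [add_sub_assoc]
        congr 1
        ext i j
        by_cases hj : j = l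
        · simp only [Matrix.sub_apply, colR, if_pos hj, matPos, smulM_apply, neg_one_mul]
          linarith [posSub (Bmat B0 w i j)]
        · simp [colR, hj]
      · have hneg := epsCol_spec_neg hsc h
        have hcol : colR (matPos (Cmat B0 w)) l = 0 := by
          ext i j
          by_cases hj : j = l
          · simp [colR, matPos, hj, max_of_nonpos' (hneg i)]
          · simp [colR, hj]
        rw [hcol, mul_zero, sub_zero, h, neg_neg]
        congr 1
        rw [Fmat, smulM_one]
    have hBs : Bmat B0 (w ++ [l])
        = Fmat (Bmat B0 w) l (-(epsCol (Cmat B0 w) l)) * Bmat B0 w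
          * Emat (Bmat B0 w) l (epsCol (Cmat B0 w) l) := by
      rw [Bmat_append, mutB_eq h0 hε]
    have hFF : Fmat (Bmat B0 w) l (-(epsCol (Cmat B0 w) l))
        * Fmat (Bmat B0 w) l (-(epsCol (Cmat B0 w) l)) = 1 := Fmat_invol _ h0
    constructor
    · rw [hC, hBs, hG]
      have haux : Fmat (Bmat B0 w) l (-(epsCol (Cmat B0 w) l)) *
          (Fmat (Bmat B0 w) l (-(epsCol (Cmat B0 w) l)) *
            (Bmat B0 w * Emat (Bmat B0 w) l (epsCol (Cmat B0 w) l)))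
          = Bmat B0 w * Emat (Bmat B0 w) l (epsCol (Cmat B0 w) l) := by
        rw [← mul_assoc, hFF, one_mul]
      calc B0 * (Cmat B0 w * Emat (Bmat B0 w) l (epsCol (Cmat B0 w) l))
          = (B0 * Cmat B0 w) * Emat (Bmat B0 w) l (epsCol (Cmat B0 w) l) := by
            rw [mul_assoc]
        _ = (Gmat B0 w * Bmat B0 w) * Emat (Bmat B0 w) l (epsCol (Cmat B0 w) l) := by
            rw [hK1]
        _ = Gmat B0 w * (Bmat B0 w * Emat (Bmat B0 w) l (epsCol (Cmat B0 w) l)) := by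
            rw [mul_assoc]
        _ = Gmat B0 w * (Fmat (Bmat B0 w) l (-(epsCol (Cmat B0 w) l)) *
              (Fmat (Bmat B0 w) l (-(epsCol (Cmat B0 w) l)) *
                (Bmat B0 w * Emat (Bmat B0 w) l (epsCol (Cmat B0 w) l)))) := by rw [haux]
        _ = (Gmat B0 w * Fmat (Bmat B0 w) l (-(epsCol (Cmat B0 w) l))) *
              (Fmat (Bmat B0 w) l (-(epsCol (Cmat B0 w) l)) * Bmat B0 w *
                Emat (Bmat B0 w) l (epsCol (Cmat B0 w) l)) := by
            simp only [mul_assoc]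
    · rw [hC, hG]
      have hEE : Emat (Bmat B0 w) l (epsCol (Cmat B0 w) l)
          * Emat (Bmat B0 w) l (epsCol (Cmat B0 w) l) = 1 := Emat_invol _ h0
      have hTr : (Gmat B0 w * Fmat (Bmat B0 w) l (-(epsCol (Cmat B0 w) l)))ᵀ
          = (Fmat (Bmat B0 w) l (-(epsCol (Cmat B0 w) l)))ᵀ * (Gmat B0 w)ᵀ :=
        Matrix.transpose_mul _ _
      have hFD : (Fmat (Bmat B0 w) l (-(epsCol (Cmat B0 w) l)))ᵀ * Matrix.diagonal d
          = Matrix.diagonal d * Emat (Bmat B0 w) l (epsCol (Cmat B0 w) l) := by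
        have := Fmat_transpose hskew l (-(epsCol (Cmat B0 w) l))
        rwa [neg_neg] at this
      calc (Gmat B0 w * Fmat (Bmat B0 w) l (-(epsCol (Cmat B0 w) l)))ᵀ *
            Matrix.diagonal d * (Cmat B0 w * Emat (Bmat B0 w) l (epsCol (Cmat B0 w) l))
          = (Fmat (Bmat B0 w) l (-(epsCol (Cmat B0 w) l)))ᵀ *
              ((Gmat B0 w)ᵀ * Matrix.diagonal d * Cmat B0 w) *
              Emat (Bmat B0 w) l (epsCol (Cmat B0 w) l) := by
            rw [hTr]; simp only [mul_assoc]
        _ = (Fmat (Bmat B0 w) l (-(epsCol (Cmat B0 w) l)))ᵀ * Matrix.diagonal d *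
              Emat (Bmat B0 w) l (epsCol (Cmat B0 w) l) := by rw [hdual]
        _ = Matrix.diagonal d * (Emat (Bmat B0 w) l (epsCol (Cmat B0 w) l) *
              Emat (Bmat B0 w) l (epsCol (Cmat B0 w) l)) := by
            rw [hFD]; simp only [mul_assoc]
        _ = Matrix.diagonal d := by rw [hEE, mul_one]

end Part3
section Part4
variable {n : ℕ}

lemma smulM_mul (c : ℤ) (X M : Matrix (Fin n) (Fin n) ℤ) :
    smulM c X * M = smulM c (X * M) := by
  ext i j
  simp [Matrix.mul_apply, smulM, Finset.mul_sum, mul_assoc]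

/-- `T` statement: second tropical duality along the word `w`. -/
def Tst (B : Matrix (Fin n) (Fin n) ℤ) (w : List (Fin n)) : Prop :=
  Cmat B w * Cmat (-(Bmat B w)) w.reverse = 1

/-- Composition (cocycle) statement with the dual sign. -/
def CLst (B : Matrix (Fin n) (Fin n) ℤ) (l : Fin n) (u : List (Fin n)) : Prop :=
  Cmat B (l :: u)
    = Emat B l (epsCol (Cmat (-(Bmat B (l :: u))) u.reverse) l) * Cmat (mutB B l) u

lemma CLstep_abstract {B B1 Bu C1 C2 Ct C1' C2' Ct' G2 Gt : Matrix (Fin n) (Fin n) ℤ}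
    {d : Fin n → ℤ} (hd : ∀ i, 0 < d i) (l j : Fin n)
    (hBll : B l l = 0) (hBujj : Bu j j = 0)
    (hBrow : ∀ t, B l t = -(B1 l t))
    (sc1 : SignCoherent C1) (sc2 : SignCoherent C2)
    (sct : SignCoherent Ct) (sct' : SignCoherent Ct')
    (hCL : C1 = Emat B l (epsCol Ct l) * C2)
    (hstep1 : C1' = C1 * Emat Bu j (epsCol C1 j))
    (hstep2 : C2' = C2 * Emat Bu j (epsCol C2 j))
    (hTu : C2 * Ct = 1) (hTu' : C2' * Ct' = 1)
    (hK1 : B1 * C2 = G2 * Bu)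
    (hdual2 : G2ᵀ * Matrix.diagonal d * C2 = Matrix.diagonal d)
    (hdualr : Gtᵀ * Matrix.diagonal d * Ct = Matrix.diagonal d) :
    C1' = Emat B l (epsCol Ct' l) * C2' := by
  have hCtC2 : Ct * C2 = 1 := mul_eq_one_comm.mp hTu
  have hEEj : Emat Bu j (epsCol C2 j) * Emat Bu j (epsCol C2 j) = 1 := Emat_invol _ hBujj
  have hCt' : Ct' = Emat Bu j (epsCol C2 j) * Ct := by
    apply invUnique hTu'
    rw [hstep2]
    calc (C2 * Emat Bu j (epsCol C2 j)) * (Emat Bu j (epsCol C2 j) * Ct)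
        = C2 * ((Emat Bu j (epsCol C2 j) * Emat Bu j (epsCol C2 j)) * Ct) := by
          simp only [mul_assoc]
      _ = 1 := by rw [hEEj, one_mul, hTu]
  by_cases hA : ∃ i, i ≠ l ∧ C2 i j ≠ 0
  · obtain ⟨i0, hi0l, hi00⟩ := hA
    have hagree1 : ∀ i, i ≠ l → C1 i j = C2 i j := fun i hi => by
      rw [hCL]; exact Emat_mul_apply_ne _ _ hi
    have hee : epsCol C1 j = epsCol C2 j := epsCol_congr sc2 sc1 hagree1 i0 hi0l hi00
    have hi1 : ∃ i, i ≠ j ∧ Ct i l ≠ 0 := by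
      by_contra hcon
      push_neg at hcon
      have hv : ∀ i, C2 i j * Ct j l = (1 : Matrix (Fin n) (Fin n) ℤ) i l := by
        intro i
        have h2 : (C2 * Ct) i l = C2 i j * Ct j l := by
          rw [Matrix.mul_apply]
          exact Finset.sum_eq_single j (fun t _ ht => by rw [hcon t ht, mul_zero])
            (fun hh => absurd (Finset.mem_univ j) hh)
        rw [← h2, hTu]
      have hl := hv l
      rw [Matrix.one_apply_eq] at hl
      have h2 := hv i0
      rw [Matrix.one_apply_ne hi0l] at h2
      rcases mul_eq_zero.mp h2 with h3 | h3
      · exact hi00 h3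
      · rw [h3, mul_zero] at hl; exact one_ne_zero hl.symm
    obtain ⟨i1, hi1j, hi10⟩ := hi1
    have hagree2 : ∀ i, i ≠ j → Ct' i l = Ct i l := fun i hi => by
      rw [hCt']; exact Emat_mul_apply_ne _ _ hi
    have hss : epsCol Ct' l = epsCol Ct l := epsCol_congr sct sct' hagree2 i1 hi1j hi10
    rw [hstep1, hee, hCL, hss, hstep2, mul_assoc]
  · push_neg at hA
    have key : ∀ i, Ct i l * C2 l j = (1 : Matrix (Fin n) (Fin n) ℤ) i j := by
      intro i
      have h2 : (Ct * C2) i j = Ct i l * C2 l j := by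
        rw [Matrix.mul_apply]
        exact Finset.sum_eq_single l (fun t _ ht => by rw [hA t ht, mul_zero])
          (fun hh => absurd (Finset.mem_univ l) hh)
      rw [← h2, hCtC2]
    have hc2 : C2 l j * Ct j l = 1 := by
      have h2 := key j
      rw [Matrix.one_apply_eq] at h2
      rw [mul_comm]; exact h2
    have hcu : C2 l j = 1 ∨ C2 l j = -1 :=
      Int.isUnit_iff.mp (IsUnit.of_mul_eq_one _ hc2)
    have hcne : C2 l j ≠ 0 := by rcases hcu with h | h <;> rw [h] <;> norm_num
    have hCtjl : Ct j l = C2 l j := by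
      rcases hcu with h | h <;> rw [h] at hc2 ⊢ <;> linarith
    have hCt0 : ∀ i, i ≠ j → Ct i l = 0 := by
      intro i hi
      have h2 := key i
      rw [Matrix.one_apply_ne hi] at h2
      rcases mul_eq_zero.mp h2 with h3 | h3
      · exact h3
      · exact absurd h3 hcne
    have hε' : epsCol C2 j = C2 l j := epsCol_single hA rfl hcu
    have hC1col : ∀ i, C1 i j = if i = l then -(C2 l j) else 0 := by
      intro i; rw [hCL]; exact Emat_mul_col_single _ hBll hA i
    have hε : epsCol C1 j = -(C2 l j) := by
      apply epsCol_single (r := l) (fun i hi => by rw [hC1col i, if_neg hi])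
        (by rw [hC1col l, if_pos rfl])
      rcases hcu with h | h <;> rw [h] <;> norm_num
    have hσ : epsCol Ct l = C2 l j := epsCol_single hCt0 hCtjl hcu
    have hCt'col : ∀ i, Ct' i l = if i = j then -(C2 l j) else 0 := by
      intro i
      have h2 := Emat_mul_col_single (epsCol C2 j) hBujj hCt0 i
      rw [hCt', h2, hCtjl]
    have hσ' : epsCol Ct' l = -(C2 l j) := by
      apply epsCol_single (r := j) (fun i hi => by rw [hCt'col i, if_neg hi])
        (by rw [hCt'col j, if_pos rfl])
      rcases hcu with h | h <;> rw [h] <;> norm_num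
    -- row facts for `G2`
    have hG1 : ∀ s', G2 l s' * d l * C2 l j = (Matrix.diagonal d) s' j := by
      intro s'
      have h2 := congrFun (congrFun hdual2 s') j
      rw [Matrix.mul_apply] at h2
      rw [Finset.sum_eq_single l (fun t _ ht => by rw [hA t ht, mul_zero])
        (fun hh => absurd (Finset.mem_univ l) hh)] at h2
      rw [Matrix.mul_diagonal, Matrix.transpose_apply] at h2
      exact h2
    have hG2row : ∀ s', s' ≠ j → G2 l s' = 0 := by
      intro s' hs'
      have h2 := hG1 s'
      rw [Matrix.diagonal_apply_ne _ hs'] at h2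
      rcases mul_eq_zero.mp h2 with h3 | h3
      · rcases mul_eq_zero.mp h3 with h4 | h4
        · exact h4
        · exact absurd h4 (hd l).ne'
      · exact absurd h3 hcne
    have hG2lj : G2 l j * d l * C2 l j = d j := by
      have h2 := hG1 j
      rwa [Matrix.diagonal_apply_eq] at h2
    have hGt : Gt j l * d j * C2 l j = d l := by
      have h2 := congrFun (congrFun hdualr l) l
      rw [Matrix.mul_apply] at h2
      rw [Finset.sum_eq_single j (fun t _ ht => by rw [hCt0 t ht, mul_zero])
        (fun hh => absurd (Finset.mem_univ j) hh)] at h2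
      rw [Matrix.mul_diagonal, Matrix.transpose_apply, hCtjl, Matrix.diagonal_apply_eq] at h2
      exact h2
    have hcc : C2 l j * C2 l j = 1 := by rcases hcu with h | h <;> rw [h] <;> norm_num
    have hGG : G2 l j * Gt j l = 1 := by
      have h4 : (G2 l j * Gt j l) * (d l * d j) * (C2 l j * C2 l j) = d j * d l := by
        calc (G2 l j * Gt j l) * (d l * d j) * (C2 l j * C2 l j)
            = (G2 l j * d l * C2 l j) * (Gt j l * d j * C2 l j) := by ring
          _ = d j * d l := by rw [hG2lj, hGt]
      rw [hcc, mul_one] at h4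
      have h5 : (G2 l j * Gt j l) * (d l * d j) = 1 * (d l * d j) := by rw [h4]; ring
      exact mul_right_cancel₀ (mul_pos (hd l) (hd j)).ne' h5
    have hG2c : G2 l j = C2 l j := by
      rcases Int.isUnit_iff.mp (IsUnit.of_mul_eq_one _ hGG) with h | h <;>
        rcases hcu with h2 | h2
      · rw [h, h2]
      · exfalso; rw [h, h2] at hG2lj; simp at hG2lj; linarith [hd l, hd j]
      · exfalso; rw [h, h2] at hG2lj; simp at hG2lj; linarith [hd l, hd j]
      · rw [h, h2]
    have hrowl : ∀ s, (B * C2) l s = -(C2 l j * Bu j s) := by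
      intro s
      have h1 : (B * C2) l s = -((B1 * C2) l s) := by
        rw [Matrix.mul_apply, Matrix.mul_apply, ← Finset.sum_neg_distrib]
        exact Finset.sum_congr rfl fun t _ => by rw [hBrow t]; ring
      rw [h1, hK1, Matrix.mul_apply]
      rw [Finset.sum_eq_single j (fun t _ ht => by rw [hG2row t ht, zero_mul])
        (fun hh => absurd (Finset.mem_univ j) hh)]
      rw [hG2c]
    have hrow2 : ∀ s, ((B * C2) * Emat Bu j (-(C2 l j))) l s = -(C2 l j * Bu j s) := by
      intro s
      rw [mul_Emat_apply, hrowl s, hrowl j]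
      by_cases hs : s = j
      · rw [hs, hBujj]; simp
      · rw [if_neg hs, hBujj]; simp
    rw [hstep1, hε, hCL, hσ, hstep2, hε', hσ']
    have main : rowR (smulM (C2 l j) B) l * C2 * Emat Bu j (-(C2 l j))
        = Emat B l (-(C2 l j)) * (C2 * rowR (smulM (C2 l j) Bu) j) := by
      rw [rowR_mul, rowR_mul, mul_rowR]
      ext i s
      simp only [rowR]
      by_cases hi : i = l
      · rw [if_pos hi, hi, smulM_mul, smulM_mul, smulM_apply, hrow2 s]
        rw [Matrix.mul_apply, Finset.sum_eq_single l
          (fun t _ ht => by simp [Matrix.vecMulVec_apply, hA t ht])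
          (fun hh => absurd (Finset.mem_univ l) hh),
          Matrix.vecMulVec_apply, Emat_apply_ll _ hBll, smulM_apply]
        ring
      · rw [if_neg hi, Emat_mul_apply_ne _ _ hi, Matrix.vecMulVec_apply, hA i hi, zero_mul]
    calc (Emat B l (C2 l j) * C2) * Emat Bu j (-(C2 l j))
        = ((Emat B l (-(C2 l j)) + rowR (smulM (C2 l j) B) l) * C2) * Emat Bu j (-(C2 l j)) := by
          rw [← Emat_sub]
      _ = Emat B l (-(C2 l j)) * C2 * Emat Bu j (-(C2 l j))
            + rowR (smulM (C2 l j) B) l * C2 * Emat Bu j (-(C2 l j)) := by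
          rw [add_mul, add_mul]
      _ = Emat B l (-(C2 l j)) * C2 * Emat Bu j (-(C2 l j))
            + Emat B l (-(C2 l j)) * (C2 * rowR (smulM (C2 l j) Bu) j) := by rw [main]
      _ = Emat B l (-(C2 l j)) * (C2 * (Emat Bu j (-(C2 l j)) + rowR (smulM (C2 l j) Bu) j)) := by
          rw [mul_add, mul_add, mul_assoc]
      _ = Emat B l (-(C2 l j)) * (C2 * Emat Bu j (C2 l j)) := by rw [← Emat_sub]

lemma Tstep (hGSC : GlobalSC n) {B : Matrix (Fin n) (Fin n) ℤ} {d : Fin n → ℤ}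
    (hB : SkewSymmBy B d) (l : Fin n) (u : List (Fin n))
    (hCL : CLst B l u) (hT : Tst (mutB B l) u) : Tst B (l :: u) := by
  have hB1 : SkewSymmBy (mutB B l) d := skew_mutB hB l
  have hBu : SkewSymmBy (Bmat (mutB B l) u) d := skew_Bmat hB1 u
  have hcons : Bmat B (l :: u) = Bmat (mutB B l) u := Bmat_cons B l u
  have hnegBu : SkewSymmBy (-(Bmat (mutB B l) u)) d := skew_neg hBu
  have hsc : SignCoherent (Cmat (-(Bmat (mutB B l) u)) u.reverse) := hGSC _ ⟨d, hnegBu⟩ _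
  have h0' : (Bmat (-(Bmat (mutB B l) u)) u.reverse) l l = 0 :=
    skew_diag (skew_Bmat hnegBu u.reverse) l
  have hrev : Bmat (-(Bmat (mutB B l) u)) u.reverse = -(mutB B l) := by
    rw [Bmat_neg, Bmat_rev]
  unfold Tst at hT ⊢
  unfold CLst at hCL
  rw [hcons] at hCL ⊢
  rw [List.reverse_cons, stepC hsc h0', hrev, Emat_negmut, hCL]
  have hE : Emat B l (epsCol (Cmat (-(Bmat (mutB B l) u)) u.reverse) l) *
      Emat B l (epsCol (Cmat (-(Bmat (mutB B l) u)) u.reverse) l) = 1 :=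
    Emat_invol _ (skew_diag hB l)
  calc (Emat B l (epsCol (Cmat (-(Bmat (mutB B l) u)) u.reverse) l) * Cmat (mutB B l) u) *
        (Cmat (-(Bmat (mutB B l) u)) u.reverse *
          Emat B l (epsCol (Cmat (-(Bmat (mutB B l) u)) u.reverse) l))
      = Emat B l (epsCol (Cmat (-(Bmat (mutB B l) u)) u.reverse) l) *
          ((Cmat (mutB B l) u * Cmat (-(Bmat (mutB B l) u)) u.reverse) *
            Emat B l (epsCol (Cmat (-(Bmat (mutB B l) u)) u.reverse) l)) := by
        simp only [mul_assoc]
    _ = 1 := by rw [hT, one_mul, hE]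

lemma CLstep (hGSC : GlobalSC n) {B : Matrix (Fin n) (Fin n) ℤ} {d : Fin n → ℤ}
    (hB : SkewSymmBy B d) (l : Fin n) (u : List (Fin n)) (j : Fin n)
    (hCL : CLst B l u) (hTu : Tst (mutB B l) u) (hTu' : Tst (mutB B l) (u ++ [j])) :
    CLst B l (u ++ [j]) := by
  have hB1 : SkewSymmBy (mutB B l) d := skew_mutB hB l
  have hBu : SkewSymmBy (Bmat (mutB B l) u) d := skew_Bmat hB1 u
  have hcons : Bmat B (l :: u) = Bmat (mutB B l) u := Bmat_cons B l u
  unfold CLst at hCL ⊢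
  unfold Tst at hTu hTu'
  rw [hcons] at hCL
  have hls : l :: (u ++ [j]) = (l :: u) ++ [j] := rfl
  rw [hls]
  have hBapp : Bmat B ((l :: u) ++ [j]) = mutB (Bmat (mutB B l) u) j := by
    rw [Bmat_append, hcons]
  have hBapp2 : Bmat (mutB B l) (u ++ [j]) = mutB (Bmat (mutB B l) u) j :=
    Bmat_append _ _ _
  have hrevapp : (u ++ [j]).reverse = j :: u.reverse := by simp
  rw [hBapp, hrevapp]
  rw [hBapp2, hrevapp] at hTu'
  have hstep1 : Cmat B ((l :: u) ++ [j])
      = Cmat B (l :: u) * Emat (Bmat (mutB B l) u) j (epsCol (Cmat B (l :: u)) j) := by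
    have h2 := stepC (B0 := B) (w := l :: u) (l := j) (hGSC B ⟨d, hB⟩ (l :: u))
      (by rw [hcons]; exact skew_diag hBu j)
    rwa [hcons] at h2
  have hstep2 : Cmat (mutB B l) (u ++ [j])
      = Cmat (mutB B l) u * Emat (Bmat (mutB B l) u) j (epsCol (Cmat (mutB B l) u) j) :=
    stepC (hGSC _ ⟨d, hB1⟩ u) (skew_diag hBu j)
  exact CLstep_abstract hB.1 l j (skew_diag hB l) (skew_diag hBu j)
    (fun t => by rw [mutB_row_l, neg_neg])
    (hGSC B ⟨d, hB⟩ (l :: u)) (hGSC _ ⟨d, hB1⟩ u)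
    (hGSC _ ⟨d, skew_neg hBu⟩ u.reverse)
    (hGSC _ ⟨d, skew_neg (skew_mutB hBu j)⟩ (j :: u.reverse))
    hCL hstep1 hstep2 hTu hTu'
    (core hGSC _ d hB1 u).1 (core hGSC _ d hB1 u).2
    (core hGSC _ d (skew_neg hBu) u.reverse).2

lemma bundle (hGSC : GlobalSC n) : ∀ m : ℕ,
    (∀ (w : List (Fin n)) (B : Matrix (Fin n) (Fin n) ℤ) (d : Fin n → ℤ),
      w.length = m → SkewSymmBy B d → Tst B w) ∧
    (∀ (u : List (Fin n)) (B : Matrix (Fin n) (Fin n) ℤ) (d : Fin n → ℤ) (l : Fin n),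
      u.length = m → SkewSymmBy B d → CLst B l u) := by
  intro m
  induction m with
  | zero =>
    constructor
    · intro w B d hw hB
      rw [List.length_eq_zero_iff.mp hw]
      unfold Tst
      rw [Cmat_nil, one_mul, List.reverse_nil, Cmat_nil]
    · intro u B d l hu hB
      rw [List.length_eq_zero_iff.mp hu]
      unfold CLst
      have hone : ∀ i, 0 ≤ (1 : Matrix (Fin n) (Fin n) ℤ) i l := by
        intro i; by_cases h : i = l <;> simp [Matrix.one_apply, h]
      have h1 : Cmat B [l] = mutC B 1 l := Cmat_append B [] l
      rw [h1, mutC_eq_pos (skew_diag hB l) hone, Cmat_nil, mul_one,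
        show List.reverse ([] : List (Fin n)) = [] from rfl, Cmat_nil, epsCol_id, one_mul]
  | succ m ih =>
    obtain ⟨ihT, ihCL⟩ := ih
    have hT' : ∀ (w : List (Fin n)) (B : Matrix (Fin n) (Fin n) ℤ) (d : Fin n → ℤ),
        w.length = m + 1 → SkewSymmBy B d → Tst B w := by
      intro w B d hw hB
      cases w with
      | nil => simp at hw
      | cons l u =>
        have hu : u.length = m := by simpa using hw
        exact Tstep hGSC hB l u (ihCL u B d l hu hB)
          (ihT u (mutB B l) d hu (skew_mutB hB l))
    refine ⟨hT', ?_⟩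
    intro u' B d l hu' hB
    rcases List.eq_nil_or_concat u' with rfl | ⟨u, j, rfl⟩
    · simp at hu'
    · have hu : u.length = m := by
        have := hu'
        simp [List.concat_eq_append] at this
        exact this
      rw [List.concat_eq_append]
      rw [List.concat_eq_append] at hu'
      exact CLstep hGSC hB l u j (ihCL u B d l hu hB)
        (ihT u (mutB B l) d hu (skew_mutB hB l))
        (hT' (u ++ [j]) (mutB B l) d hu' (skew_mutB hB l))

end Part4

/-- second tropical duality: under the global sign-coherence hypothesis,
`C^B(w) · C^{-B^B(w)}(rev w) = I`. -/
theorem tropical_duality_C_C {n : ℕ} (hGSC : GlobalSC n) (B : Matrix (Fin n) (Fin n) ℤ)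
    (hB : SkewSymmetrizable B) (w : List (Fin n)) :
    Cmat B w * Cmat (-(Bmat B w)) w.reverse = 1 := by
  obtain ⟨d, hd⟩ := hB
  exact (bundle hGSC w.length).1 w B d rfl hd
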